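/- arXiv:1601.05716 — 3 statements merged into one kernel-verified Lean document; each statement's English description precedes it below -/
import Mathlib

section
/- Let n, N, q be integers with 1 ≤ n ≤ N and q > 2N − n + 1, and let H_1, …, H_q be hyperplanes of ℙ^n(ℂ) with coefficient vectors h_1, …, h_q ∈ ℂ^{n+1} in N-subgeneral position. Then there exist positive rational numbers ω(1), …, ω(q) (Nochka weights) satisfying: (i) 0 < ω(j) ≤ q for all j ∈ {1,…,q}; (ii) setting ω̃ := max_{1≤j≤q} ω(j), one has ∑_{j=1}^q ω(j) = ω̃·(q − 2N + n − 1) + n + 1; (iii) (n+1)/(2N−n+1) ≤ ω̃ ≤ n/N; (iv) for every nonempty subset R ⊆ {1,…,q} with |R| ≤ N + 1, ∑_{j∈R} ω(j) ≤ rk(R). -/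
open Finset

noncomputable section

/-- `H₁, …, H_q` (given by coefficient vectors) are in `N`-subgeneral position. -/
def SubgeneralPos (N : ℕ) {n q : ℕ} (h : Fin q → Fin (n + 1) → ℂ) : Prop :=
  (∀ j, h j ≠ 0) ∧
  ∀ R : Finset (Fin q), R.card = N + 1 → Submodule.span ℂ (h '' ↑R) = ⊤

/-- `rk(R)`: the dimension of the span of the coefficient vectors indexed by `R`. -/
def rk {n q : ℕ} (h : Fin q → Fin (n + 1) → ℂ) (R : Finset (Fin q)) : ℕ :=
  Module.finrank ℂ (Submodule.span ℂ (h '' ↑R))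

namespace NochkaAux

open Submodule Module

variable {n N q : ℕ} (h : Fin q → Fin (n + 1) → ℂ)

lemma rk_empty : rk h (∅ : Finset (Fin q)) = 0 := by
  simp [rk, finrank_bot]

lemma rk_mono {R S : Finset (Fin q)} (hRS : R ⊆ S) : rk h R ≤ rk h S :=
  Submodule.finrank_mono (span_mono (Set.image_mono (by exact_mod_cast hRS)))

lemma rk_le_dim (R : Finset (Fin q)) : rk h R ≤ n + 1 := by
  have := Submodule.finrank_le (Submodule.span ℂ (h '' ↑R))
  rwa [Module.finrank_fin_fun] at this

lemma rk_le_card (R : Finset (Fin q)) : rk h R ≤ R.card := by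
  have : (h '' ↑R : Set _) = ↑(R.image h) := by simp [Finset.coe_image]
  rw [rk, this]
  exact le_trans (finrank_span_finset_le_card _) (Finset.card_image_le)

lemma rk_submod (R S : Finset (Fin q)) :
    rk h (R ∪ S) + rk h (R ∩ S) ≤ rk h R + rk h S := by
  set p : Submodule ℂ (Fin (n+1) → ℂ) := Submodule.span ℂ (h '' ↑R) with hp
  set p' : Submodule ℂ (Fin (n+1) → ℂ) := Submodule.span ℂ (h '' ↑S) with hp'
  have hsup : Submodule.span ℂ (h '' ↑(R ∪ S)) = p ⊔ p' := by
    rw [hp, hp', Finset.coe_union, Set.image_union, Submodule.span_union]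
  have hinf : Submodule.span ℂ (h '' ↑(R ∩ S)) ≤ p ⊓ p' := by
    refine le_inf (span_mono (Set.image_mono ?_)) (span_mono (Set.image_mono ?_)) <;>
      simp [Finset.coe_inter]
  have h1 : rk h (R ∪ S) = finrank ℂ (p ⊔ p' : Submodule ℂ _) := by rw [rk, hsup]
  have h2 : rk h (R ∩ S) ≤ finrank ℂ (p ⊓ p' : Submodule ℂ _) := Submodule.finrank_mono hinf
  have h3 := Submodule.finrank_sup_add_finrank_inf_eq p p'
  have h4 : rk h R = finrank ℂ p := rfl
  have h5 : rk h S = finrank ℂ p' := rfl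
  omega

lemma rk_insert_le (R : Finset (Fin q)) (j : Fin q) :
    rk h (insert j R) ≤ rk h R + 1 := by
  have he : (insert j R) = {j} ∪ R := by rw [Finset.insert_eq]
  have h1 := rk_submod h {j} R
  have h2 : rk h ({j} : Finset (Fin q)) ≤ 1 := by
    simpa using rk_le_card h ({j} : Finset (Fin q))
  rw [← he] at h1
  omega

lemma rk_pos (hne : ∀ j, h j ≠ 0) {R : Finset (Fin q)} (hR : R.Nonempty) : 1 ≤ rk h R := by
  obtain ⟨j, hj⟩ := hR
  have hmem : h j ∈ Submodule.span ℂ (h '' ↑R) :=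
    Submodule.subset_span ⟨j, by simpa using hj, rfl⟩
  rcases Nat.eq_zero_or_pos (rk h R) with hr | hr
  · have : Submodule.span ℂ (h '' ↑R) = ⊥ := Submodule.finrank_eq_zero.mp hr
    rw [this] at hmem
    exact absurd (by simpa using hmem) (hne j)
  · exact hr

lemma rk_singleton (hne : ∀ j, h j ≠ 0) (j : Fin q) : rk h ({j} : Finset (Fin q)) = 1 := by
  have h1 := rk_le_card h ({j} : Finset (Fin q))
  have h2 := rk_pos h hne (Finset.singleton_nonempty j)
  simp at h1
  omega

lemma rk_diff_le_aux (k : ℕ) : ∀ R T : Finset (Fin q), R ⊆ T → T.card ≤ R.card + k →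
    rk h T ≤ rk h R + k := by
  induction k with
  | zero =>
    intro R T hsub hcard
    have : R = T := Finset.eq_of_subset_of_card_le hsub (by omega)
    simp [← this]
  | succ k ih =>
    intro R T hsub hcard
    by_cases heq : R = T
    · subst heq; omega
    · obtain ⟨j, hjT, hjR⟩ := Finset.exists_of_ssubset (lt_of_le_of_ne hsub heq)
      have h1 : insert j R ⊆ T := Finset.insert_subset hjT hsub
      have h2 : (insert j R).card = R.card + 1 := Finset.card_insert_of_notMem hjR
      have := ih (insert j R) T h1 (by omega)
      have := rk_insert_le h R j
      omega

lemma rk_full (hH : SubgeneralPos N h) {R : Finset (Fin q)} (hcard : N + 1 ≤ R.card) :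
    rk h R = n + 1 := by
  obtain ⟨T, hTR, hTcard⟩ := Finset.exists_subset_card_eq hcard
  have htop : Submodule.span ℂ (h '' ↑T) = ⊤ := hH.2 T hTcard
  have hle : Submodule.span ℂ (h '' ↑T) ≤ Submodule.span ℂ (h '' ↑R) :=
    span_mono (Set.image_mono (by exact_mod_cast hTR))
  have : Submodule.span ℂ (h '' ↑R) = ⊤ := top_le_iff.mp (htop ▸ hle)
  rw [rk, this, finrank_top, Module.finrank_fin_fun]

lemma rk_lower (hH : SubgeneralPos N h) (hq : N + 1 ≤ q) {R : Finset (Fin q)}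
    (hcard : R.card ≤ N + 1) : R.card + (n + 1) ≤ rk h R + (N + 1) := by
  have hu : (Finset.univ : Finset (Fin q)).card = q := by simp
  obtain ⟨T, hRT, _, hTcard⟩ :=
    Finset.exists_subsuperset_card_eq (Finset.subset_univ R) hcard (by omega)
  have h1 := rk_diff_le_aux h (N + 1 - R.card) R T hRT (by omega)
  have h2 := rk_full h hH (le_of_eq hTcard.symm)
  omega

lemma card_le_of_rk_le (hH : SubgeneralPos N h) {B : Finset (Fin q)} (hB : rk h B ≤ n) :
    B.card ≤ N := by
  by_contra hc
  have := rk_full h hH (R := B) (by omega)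
  omega

/-- The provisional Nochka constant attached to a subset. -/
def theta (n N : ℕ) {q : ℕ} (h : Fin q → Fin (n + 1) → ℂ) (B : Finset (Fin q)) : ℚ :=
  ((n : ℚ) + 1 - rk h B) / ((2 * N : ℚ) - n + 1 - B.card)

/-- The invariant maintained along the Nochka chain construction. -/
structure Inv (n N : ℕ) {q : ℕ} (h : Fin q → Fin (n + 1) → ℂ)
    (ω : Fin q → ℚ) (B : Finset (Fin q)) : Prop where
  rk_le : rk h B ≤ n
  sum_le : ∀ S ⊆ B, ∑ j ∈ S, ω j ≤ (rk h S : ℚ)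
  sum_eq : ∑ j ∈ B, ω j = (rk h B : ℚ)
  bounds : ∀ j ∈ B, 0 < ω j ∧ ω j < theta n N h B
  closed : ∀ j ∉ B, rk h (insert j B) = rk h B + 1
  theta_ge : ((n : ℚ) + 1) / ((2 * N : ℚ) - n + 1) ≤ theta n N h B

lemma denom_pos (hnN : n ≤ N) (hH : SubgeneralPos N h) {B : Finset (Fin q)}
    (hB : rk h B ≤ n) : (0 : ℚ) < (2 * N : ℚ) - n + 1 - B.card := by
  have h1 : (B.card : ℚ) ≤ N := by exact_mod_cast card_le_of_rk_le h hH hB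
  have h2 : (n : ℚ) ≤ N := by exact_mod_cast hnN
  linarith

lemma theta_pos (hnN : n ≤ N) (hH : SubgeneralPos N h) {B : Finset (Fin q)}
    (hB : rk h B ≤ n) : 0 < theta n N h B := by
  have h1 : (rk h B : ℚ) ≤ n := by exact_mod_cast hB
  exact div_pos (by linarith) (denom_pos h hnN hH hB)

lemma chain_lemma (hn : 1 ≤ n) (hnN : n ≤ N) (hq : 2 * N - n + 1 < q)
    (hH : SubgeneralPos N h) :
    ∀ m : ℕ, ∀ B : Finset (Fin q), ∀ ω : Fin q → ℚ, q ≤ B.card + m → Inv n N h ω B →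
    ∃ B' ω', Inv n N h ω' B' ∧ ∀ A : Finset (Fin q), B' ⊆ A → rk h A ≤ n →
      theta n N h B' * ((A.card : ℚ) - B'.card) ≤ (rk h A : ℚ) - rk h B' := by
  classical
  intro m
  induction m with
  | zero =>
    intro B ω hm hInv
    exfalso
    have h1 : N + 1 ≤ B.card := by omega
    have := rk_full h hH h1
    have := hInv.rk_le
    omega
  | succ m ih =>
    intro B ω hm hInv
    by_cases hstop : ∀ A : Finset (Fin q), B ⊆ A → rk h A ≤ n →
        theta n N h B * ((A.card : ℚ) - B.card) ≤ (rk h A : ℚ) - rk h B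
    · exact ⟨B, ω, hInv, hstop⟩
    push_neg at hstop
    obtain ⟨A₀, hBA₀, hrkA₀, hA₀⟩ := hstop
    -- basic quantities for B
    have hrB : rk h B ≤ n := hInv.rk_le
    have hDpos : (0 : ℚ) < (2 * N : ℚ) - n + 1 - B.card := denom_pos h hnN hH hrB
    have hθB : theta n N h B * ((2 * N : ℚ) - n + 1 - B.card)
        = (n : ℚ) + 1 - rk h B := div_mul_cancel₀ _ (ne_of_gt hDpos)
    have hθBpos : 0 < theta n N h B := theta_pos h hnN hH hrB
    -- A₀ is a strict superset of B
    have hA₀ne : B ≠ A₀ := by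
      intro hEq
      rw [← hEq] at hA₀
      simp at hA₀
    -- the family of candidate sets
    set F : Finset (Finset (Fin q)) :=
      Finset.univ.filter (fun A => B ⊆ A ∧ B ≠ A ∧ rk h A ≤ n) with hF
    have hmemF : ∀ A : Finset (Fin q), A ∈ F ↔ B ⊆ A ∧ B ≠ A ∧ rk h A ≤ n := by
      intro A; simp [hF]
    have hFne : F.Nonempty := ⟨A₀, (hmemF A₀).2 ⟨hBA₀, hA₀ne, hrkA₀⟩⟩
    set slope : Finset (Fin q) → ℚ :=
      fun A => ((rk h A : ℚ) - rk h B) / ((A.card : ℚ) - B.card) with hslope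
    obtain ⟨B', hB'F, hB'min⟩ := Finset.exists_min_image F slope hFne
    obtain ⟨hBB', hBneB', hrB'⟩ := (hmemF B').1 hB'F
    set σ : ℚ := slope B' with hσ
    -- cardinality facts
    have hssub : B ⊂ B' := lt_of_le_of_ne hBB' hBneB'
    have hcardlt : B.card < B'.card := Finset.card_lt_card hssub
    have hΔpos : (0 : ℚ) < (B'.card : ℚ) - B.card := by
      have : (B.card : ℚ) < B'.card := by exact_mod_cast hcardlt
      linarith
    -- rank increases strictly
    have hrkup : rk h B + 1 ≤ rk h B' := by
      obtain ⟨j, hjB', hjB⟩ := Finset.exists_of_ssubset hssub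
      have h1 : insert j B ⊆ B' := Finset.insert_subset hjB' hBB'
      have h2 := rk_mono h h1
      rw [hInv.closed j hjB] at h2
      exact h2
    have hrkupQ : (rk h B : ℚ) + 1 ≤ rk h B' := by exact_mod_cast hrkup
    -- slope equation and positivity
    have hσeq : σ * ((B'.card : ℚ) - B.card) = (rk h B' : ℚ) - rk h B :=
      div_mul_cancel₀ _ (ne_of_gt hΔpos)
    have hσpos : 0 < σ := by
      apply div_pos (by linarith) hΔpos
    -- minimality, in product form
    have hmin : ∀ A : Finset (Fin q), B ⊆ A → rk h A ≤ n →
        σ * ((A.card : ℚ) - B.card) ≤ (rk h A : ℚ) - rk h B := by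
      intro A hBA hrkA
      by_cases hEq : B = A
      · rw [← hEq]; simp
      · have hAF : A ∈ F := (hmemF A).2 ⟨hBA, hEq, hrkA⟩
        have h1 := hB'min A hAF
        have hcard : (0 : ℚ) < (A.card : ℚ) - B.card := by
          have : B.card < A.card := Finset.card_lt_card (lt_of_le_of_ne hBA hEq)
          have : (B.card : ℚ) < A.card := by exact_mod_cast this
          linarith
        rw [hslope] at h1
        calc σ * ((A.card : ℚ) - B.card)
            ≤ (((rk h A : ℚ) - rk h B) / ((A.card : ℚ) - B.card)) * ((A.card : ℚ) - B.card) := by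
              exact mul_le_mul_of_nonneg_right h1 (le_of_lt hcard)
          _ = (rk h A : ℚ) - rk h B := div_mul_cancel₀ _ (ne_of_gt hcard)
    -- σ < theta B
    have hσlt : σ < theta n N h B := by
      have hcard₀ : (0 : ℚ) < (A₀.card : ℚ) - B.card := by
        have : B.card < A₀.card := Finset.card_lt_card (lt_of_le_of_ne hBA₀ hA₀ne)
        have : (B.card : ℚ) < A₀.card := by exact_mod_cast this
        linarith
      have h1 := hmin A₀ hBA₀ hrkA₀
      nlinarith [h1, hA₀, hcard₀]
    -- B' is closed
    have hclosed' : ∀ j ∉ B', rk h (insert j B') = rk h B' + 1 := by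
      intro j hj
      have hub := rk_insert_le h B' j
      have hlb := rk_mono h (Finset.subset_insert j B')
      by_contra hc
      have heq : rk h (insert j B') = rk h B' := by omega
      have hsub2 : B ⊆ insert j B' := hBB'.trans (Finset.subset_insert j B')
      have hcard2 : (insert j B').card = B'.card + 1 := Finset.card_insert_of_notMem hj
      have h2 := hmin (insert j B') hsub2 (by omega)
      rw [heq, hcard2] at h2
      push_cast at h2
      nlinarith [h2, hσeq, hσpos, hΔpos]
    -- theta increases
    have hrB'n : (rk h B' : ℚ) ≤ n := by exact_mod_cast hrB'
    have hD'pos : (0 : ℚ) < (2 * N : ℚ) - n + 1 - B'.card := denom_pos h hnN hH hrB'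
    have hθB' : theta n N h B' * ((2 * N : ℚ) - n + 1 - B'.card)
        = (n : ℚ) + 1 - rk h B' := div_mul_cancel₀ _ (ne_of_gt hD'pos)
    have hθincr : theta n N h B < theta n N h B' := by
      have hσΔ : σ * ((B'.card : ℚ) - B.card) < theta n N h B * ((B'.card : ℚ) - B.card) :=
        mul_lt_mul_of_pos_right hσlt hΔpos
      have hexp : theta n N h B * ((2 * N : ℚ) - n + 1 - B'.card)
          = theta n N h B * ((2 * N : ℚ) - n + 1 - B.card)
            - theta n N h B * ((B'.card : ℚ) - B.card) := by ring
      have hgoal : theta n N h B * ((2 * N : ℚ) - n + 1 - B'.card)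
          < (n : ℚ) + 1 - rk h B' := by linarith [hθB, hσΔ, hσeq, hexp]
      have h5 := (lt_div_iff₀ hD'pos).2 hgoal
      rwa [show ((n : ℚ) + 1 - rk h B') / ((2 * N : ℚ) - n + 1 - B'.card)
        = theta n N h B' from rfl] at h5
    -- the new weight function
    set ω' : Fin q → ℚ := fun j => if j ∈ B then ω j else σ with hω'
    have hsum_split : ∀ S : Finset (Fin q),
        ∑ j ∈ S, ω' j = (∑ j ∈ S ∩ B, ω j) + ((S \ B).card : ℚ) * σ := by
      intro S
      rw [← Finset.sum_inter_add_sum_sdiff S B ω']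
      congr 1
      · exact Finset.sum_congr rfl (fun j hj => if_pos (Finset.mem_inter.1 hj).2)
      · rw [Finset.sum_congr rfl (fun j hj => if_neg (Finset.mem_sdiff.1 hj).2),
          Finset.sum_const, nsmul_eq_mul]
    -- the invariant for B'
    have hInv' : Inv n N h ω' B' := by
      constructor
      · exact hrB'
      · -- sum_le
        intro S hSB'
        rw [hsum_split S]
        have h1 : ∑ j ∈ S ∩ B, ω j ≤ (rk h (S ∩ B) : ℚ) :=
          hInv.sum_le (S ∩ B) (Finset.inter_subset_right)
        have hBS : B ∪ S ⊆ B' := Finset.union_subset hBB' hSB'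
        have hrkBS : rk h (B ∪ S) ≤ n := le_trans (rk_mono h hBS) hrB'
        have h2 := hmin (B ∪ S) Finset.subset_union_left hrkBS
        have hcardBS : (B ∪ S).card = B.card + (S \ B).card := by
          rw [← Finset.union_sdiff_self_eq_union]
          exact Finset.card_union_of_disjoint Finset.disjoint_sdiff
        rw [hcardBS] at h2
        push_cast at h2
        have h3 := rk_submod h S B
        have h4 : rk h (S ∪ B) = rk h (B ∪ S) := by rw [Finset.union_comm]
        rw [h4] at h3
        have h3Q : (rk h (B ∪ S) : ℚ) + (rk h (S ∩ B) : ℚ) ≤ (rk h S : ℚ) + rk h B := by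
          exact_mod_cast h3
        linarith
      · -- sum_eq
        rw [hsum_split B']
        have h1 : B' ∩ B = B := Finset.inter_eq_right.2 hBB'
        have h2 : ((B' \ B).card : ℚ) = (B'.card : ℚ) - B.card := by
          have := Finset.card_sdiff_of_subset hBB'
          have hle : B.card ≤ B'.card := le_of_lt hcardlt
          push_cast [this]
          have : (B.card : ℚ) ≤ B'.card := by exact_mod_cast hle
          push_cast [Nat.cast_sub hle]
          ring
        rw [h1, hInv.sum_eq, h2]
        rw [mul_comm] at hσeq
        linarith [hσeq]
      · -- bounds
        intro j hj
        by_cases hjB : j ∈ B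
        · have := hInv.bounds j hjB
          rw [hω']
          simp only [if_pos hjB]
          exact ⟨this.1, lt_trans this.2 hθincr⟩
        · rw [hω']
          simp only [if_neg hjB]
          exact ⟨hσpos, lt_trans hσlt hθincr⟩
      · exact hclosed'
      · exact le_trans hInv.theta_ge (le_of_lt hθincr)
    exact ih B' ω' (by omega) hInv'

end NochkaAux

open Submodule Module NochkaAux

set_option maxHeartbeats 1000000

/-- Nochka's theorem, existence of Nochka weights. -/
theorem nochka_weights_exist
    (n N q : ℕ) (hn : 1 ≤ n) (hnN : n ≤ N) (hq : 2 * N - n + 1 < q)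
    (h : Fin q → Fin (n + 1) → ℂ) (hH : SubgeneralPos N h) :
    ∃ ω : Fin q → ℚ, ∃ ωmax : ℚ,
      IsGreatest (Set.range ω) ωmax ∧
      (∀ j, 0 < ω j ∧ ω j ≤ (q : ℚ)) ∧
      (∑ j, ω j = ωmax * ((q : ℚ) - 2 * N + n - 1) + n + 1) ∧
      (((n : ℚ) + 1) / (2 * N - n + 1) ≤ ωmax ∧ ωmax ≤ (n : ℚ) / N) ∧
      (∀ R : Finset (Fin q), R.Nonempty → R.card ≤ N + 1 →
        ∑ j ∈ R, ω j ≤ (rk h R : ℚ)) := by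
  classical
  have hne : ∀ j, h j ≠ 0 := hH.1
  have hqN : N + 1 ≤ q := by omega
  have hnNQ : (n : ℚ) ≤ N := by exact_mod_cast hnN
  have hn1Q : (1 : ℚ) ≤ n := by exact_mod_cast hn
  -- the base invariant at ∅
  have hInv0 : Inv n N h (fun _ => 0) (∅ : Finset (Fin q)) := by
    constructor
    · rw [rk_empty]; omega
    · intro S _; simp
    · simp [rk_empty]
    · intro j hj; simp at hj
    · intro j _
      have h1 : insert j (∅ : Finset (Fin q)) = {j} := by simp
      rw [h1, rk_singleton h hne, rk_empty]
    · simp [theta, rk_empty]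
  -- run the chain construction
  obtain ⟨B, ω₀, hInv, hstop⟩ :=
    chain_lemma h hn hnN hq hH q ∅ (fun _ => 0) (by simp) hInv0
  set θ : ℚ := theta n N h B with hθdef
  set ω : Fin q → ℚ := fun j => if j ∈ B then ω₀ j else θ with hωdef
  -- basic quantities
  have hrB : rk h B ≤ n := hInv.rk_le
  have hrBQ : (rk h B : ℚ) ≤ n := by exact_mod_cast hrB
  have hDpos : (0 : ℚ) < (2 * N : ℚ) - n + 1 - B.card := denom_pos h hnN hH hrB
  have hθD : θ * ((2 * N : ℚ) - n + 1 - B.card) = (n : ℚ) + 1 - rk h B :=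
    div_mul_cancel₀ _ (ne_of_gt hDpos)
  have hθpos : 0 < θ := theta_pos h hnN hH hrB
  have hcardB : B.card ≤ N := card_le_of_rk_le h hH hrB
  have hbr : (B.card : ℚ) ≤ (rk h B : ℚ) + ((N : ℚ) - n) := by
    have := rk_lower h hH hqN (R := B) (by omega)
    have h2 : ((B.card : ℕ) : ℚ) + (n + 1) ≤ ((rk h B : ℕ) : ℚ) + (N + 1) := by
      exact_mod_cast this
    push_cast at h2 ⊢
    linarith
  have hNposQ : (0 : ℚ) < N := by linarith
  -- θ ≤ n / N
  have hθle : θ ≤ (n : ℚ) / N := by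
    rw [hθdef, theta, div_le_div_iff₀ hDpos hNposQ]
    rcases Finset.eq_empty_or_nonempty B with hB0 | hBne
    · have h1 : rk h B = 0 := by rw [hB0, rk_empty]
      have h2 : B.card = 0 := by rw [hB0]; simp
      rw [h1, h2]
      push_cast
      nlinarith [mul_nonneg (sub_nonneg.2 hnNQ) (sub_nonneg.2 hn1Q)]
    · have hr1 : (1 : ℚ) ≤ rk h B := by exact_mod_cast rk_pos h hne hBne
      nlinarith [mul_nonneg (sub_nonneg.2 hnNQ) (sub_nonneg.2 hr1),
        mul_nonneg (by linarith : (0:ℚ) ≤ (n:ℚ))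
          (by linarith [hbr] : (0:ℚ) ≤ (rk h B : ℚ) + ((N:ℚ) - n) - B.card)]
  have hθ1 : θ ≤ 1 := le_trans hθle (by rw [div_le_one hNposQ]; exact hnNQ)
  -- sum splitting for ω
  have hsum_split : ∀ S : Finset (Fin q),
      ∑ j ∈ S, ω j = (∑ j ∈ S ∩ B, ω₀ j) + ((S \ B).card : ℚ) * θ := by
    intro S
    rw [← Finset.sum_inter_add_sum_sdiff S B ω]
    congr 1
    · exact Finset.sum_congr rfl (fun j hj => if_pos (Finset.mem_inter.1 hj).2)
    · rw [Finset.sum_congr rfl (fun j hj => if_neg (Finset.mem_sdiff.1 hj).2),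
        Finset.sum_const, nsmul_eq_mul]
  -- the key estimate
  have hkey : ∀ R : Finset (Fin q), R.card ≤ N + 1 →
      (rk h (R ∩ B) : ℚ) + ((R \ B).card : ℚ) * θ ≤ (rk h R : ℚ) := by
    intro R hRcard
    set d : ℚ := ((R \ B).card : ℚ) with hddef
    have hd0 : (0 : ℚ) ≤ d := Nat.cast_nonneg _
    have hsubmod : rk h (R ∪ B) + rk h (R ∩ B) ≤ rk h R + rk h B := rk_submod h R B
    have hsubmodQ : (rk h (R ∪ B) : ℚ) + (rk h (R ∩ B) : ℚ)
        ≤ (rk h R : ℚ) + (rk h B : ℚ) := by exact_mod_cast hsubmod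
    have hcomm : rk h (B ∪ R) = rk h (R ∪ B) := by rw [Finset.union_comm]
    by_cases hcase : θ * d ≤ (n : ℚ) + 1 - rk h B
    · rcases le_or_gt (rk h (B ∪ R)) n with hx | hx
      · -- use the stopping condition
        have h2 := hstop (B ∪ R) Finset.subset_union_left hx
        have hcardBR : (B ∪ R).card = B.card + (R \ B).card := by
          rw [← Finset.union_sdiff_self_eq_union]
          exact Finset.card_union_of_disjoint Finset.disjoint_sdiff
        rw [hcardBR] at h2
        push_cast at h2
        rw [hcomm] at h2
        have h3 : θ * d ≤ (rk h (R ∪ B) : ℚ) - rk h B := by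
          rw [hddef]; linarith [h2]
        linarith
      · -- the union has full rank
        have hfull : rk h (B ∪ R) = n + 1 := by
          have := rk_le_dim h (B ∪ R); omega
        rw [hcomm] at hfull
        have hfullQ : (rk h (R ∪ B) : ℚ) = (n : ℚ) + 1 := by exact_mod_cast hfull
        linarith
    · -- the counting estimate
      push_neg at hcase
      have hdD : (2 * N : ℚ) - n + 1 - B.card < d := by
        by_contra hc
        push_neg at hc
        have := mul_le_mul_of_nonneg_left hc (le_of_lt hθpos)
        rw [hθD] at this
        linarith
      have h1θ : (0 : ℚ) ≤ 1 - θ := by linarith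
      have h2 : (1 - θ) * ((2 * N : ℚ) - n + 1 - B.card) ≤ (1 - θ) * d :=
        mul_le_mul_of_nonneg_left (le_of_lt hdD) h1θ
      have hexp : (1 - θ) * ((2 * N : ℚ) - n + 1 - B.card)
          = ((2 * N : ℚ) - n + 1 - B.card) - θ * ((2 * N : ℚ) - n + 1 - B.card) := by ring
      have h3 : (N : ℚ) - n ≤ (1 - θ) * d := by
        rw [hexp, hθD] at h2
        linarith [hbr, h2]
      have h4 := rk_lower h hH hqN hRcard
      have h4Q : ((R.card : ℕ) : ℚ) + ((n : ℚ) + 1) ≤ ((rk h R : ℕ) : ℚ) + ((N : ℚ) + 1) := by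
        exact_mod_cast h4
      have h5 : (R ∩ B).card + (R \ B).card = R.card := Finset.card_inter_add_card_sdiff R B
      have h5Q : ((R ∩ B).card : ℚ) + d = (R.card : ℚ) := by
        rw [hddef]; exact_mod_cast h5
      have h6 : (rk h (R ∩ B) : ℚ) ≤ ((R ∩ B).card : ℚ) := by
        exact_mod_cast rk_le_card h (R ∩ B)
      nlinarith [h3, h4Q, h5Q, h6]
  -- some j outside B
  have hBne_univ : ∃ j, j ∉ B := by
    by_contra hc
    push_neg at hc
    have : B = Finset.univ := Finset.eq_univ_iff_forall.2 hc
    have : B.card = q := by rw [this]; simp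
    omega
  obtain ⟨j₀, hj₀⟩ := hBne_univ
  refine ⟨ω, θ, ⟨⟨j₀, by simp [hωdef, if_neg hj₀]⟩, ?_⟩, ?_, ?_, ⟨?_, hθle⟩, ?_⟩
  · -- upper bound of the range
    rintro x ⟨j, rfl⟩
    by_cases hj : j ∈ B
    · have := (hInv.bounds j hj).2
      simp only [hωdef, if_pos hj]
      exact le_of_lt (by rw [hθdef]; exact this)
    · simp [hωdef, if_neg hj]
  · -- positivity and ≤ q
    intro j
    have hq1 : (1 : ℚ) ≤ q := by
      have : (1 : ℕ) ≤ q := by omega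
      exact_mod_cast this
    by_cases hj : j ∈ B
    · have := hInv.bounds j hj
      simp only [hωdef, if_pos hj]
      exact ⟨this.1, le_trans (le_of_lt this.2) (by rw [← hθdef]; linarith)⟩
    · simp only [hωdef, if_neg hj]
      exact ⟨hθpos, by linarith⟩
  · -- total sum
    have h1 := hsum_split Finset.univ
    have h2 : Finset.univ ∩ B = B := by simp
    have h3 : (Finset.univ \ B).card = q - B.card := by
      rw [Finset.card_sdiff_of_subset (Finset.subset_univ B)]
      simp
    have hcardQ : ((q - B.card : ℕ) : ℚ) = (q : ℚ) - B.card := by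
      have : B.card ≤ q := by omega
      push_cast [Nat.cast_sub this]
      ring
    rw [h2, h3, hcardQ, hInv.sum_eq] at h1
    rw [h1]
    linear_combination hθD
  · -- lower bound for θ
    exact hInv.theta_ge
  · -- the per-subset estimate
    intro R _ hRcard
    have h1 := hsum_split R
    have h2 : ∑ j ∈ R ∩ B, ω₀ j ≤ (rk h (R ∩ B) : ℚ) :=
      hInv.sum_le (R ∩ B) Finset.inter_subset_right
    have h3 := hkey R hRcard
    rw [h1]
    linarith
end
end

section
/- Let n, N, q be integers with 1 ≤ n ≤ N and q > 2N − n + 1, and let H_1, …, H_q be hyperplanes of ℙ^n(ℂ) with coefficient vectors h_1, …, h_q ∈ ℂ^{n+1} in N-subgeneral position. Let ω : {1,…,q} → (0,∞) satisfy ∑_{j∈R'} ω(j) ≤ rk(R') for every nonempty subset R' ⊆ {1,…,q} with |R'| ≤ N + 1 (as Nochka weights do). Then for arbitrary real numbers E_1, …, E_q with E_j ≥ 1 for all j, and for every subset R ⊆ {1,…,q} with 0 < |R| ≤ N + 1, there exist distinct indices j_1, …, j_{rk(R)} ∈ R such that dim_ℂ span{h_{j_1}, …, h_{j_{rk(R)}}}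 = rk(R) and ∏_{j∈R} E_j^{ω(j)} ≤ ∏_{l=1}^{rk(R)} E_{j_l}. -/
open Finset

noncomputable section

private lemma nochka_aux {n q N : ℕ}
    (h : Fin q → Fin (n + 1) → ℂ) (hne : ∀ j, h j ≠ 0)
    (ω : Fin q → ℝ) (E : Fin q → ℝ) (hE : ∀ j, 1 ≤ E j)
    (hrk : ∀ R' : Finset (Fin q), R'.Nonempty → R'.card ≤ N + 1 →
      ∑ j ∈ R', ω j ≤ (rk h R' : ℝ)) :
    ∀ (R : Finset (Fin q)) (hR0 : R.Nonempty), R.card ≤ N + 1 →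
      ∃ J : Finset (Fin q), J ⊆ R ∧ J.card = rk h R ∧
        Submodule.span ℂ (h '' ↑J) = Submodule.span ℂ (h '' ↑R) ∧
        (∏ j ∈ R, E j ^ ω j) * (R.inf' hR0 E) ^ ((rk h R : ℝ) - ∑ j ∈ R, ω j)
          ≤ ∏ j ∈ J, E j := by
  intro R
  induction R using Finset.strongInduction with
  | _ R IH =>
    intro hR0 hRcard
    obtain ⟨e, he, hemin⟩ := R.exists_min_image E hR0
    have hEepos : (0:ℝ) < E e := lt_of_lt_of_le one_pos (hE e)
    have hinf : R.inf' hR0 E = E e :=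
      le_antisymm (Finset.inf'_le _ he) (Finset.le_inf' _ _ hemin)
    set R' := R.erase e with hR'def
    have hins : insert e R' = R := Finset.insert_erase he
    have hnotmem : e ∉ R' := Finset.notMem_erase e R
    by_cases hR'emp : R' = ∅
    · -- R = {e}
      have hRe : R = {e} := by rw [← hins, hR'emp]; rfl
      subst hRe
      have himg : h '' ↑({e} : Finset (Fin q)) = {h e} := by simp
      have hrk1 : rk h {e} = 1 := by
        rw [rk, himg]; exact finrank_span_singleton (hne e)
      refine ⟨{e}, le_refl _, by rw [hrk1, Finset.card_singleton], rfl, ?_⟩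
      rw [hinf, hrk1, Finset.prod_singleton, Finset.prod_singleton, Finset.sum_singleton,
        ← Real.rpow_add hEepos]
      have hexp : ω e + (((1:ℕ):ℝ) - ω e) = 1 := by push_cast; ring
      rw [hexp, Real.rpow_one]
    · have hR'ne : R'.Nonempty := Finset.nonempty_iff_ne_empty.mpr hR'emp
      have hR'sub : R' ⊆ R := Finset.erase_subset e R
      have hR'card : R'.card ≤ N + 1 := le_trans (Finset.card_le_card hR'sub) hRcard
      obtain ⟨J', hJ'sub, hJ'card, hJ'span, hJ'prod⟩ :=
        IH R' (Finset.erase_ssubset he) hR'ne hR'card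
      have hm' : E e ≤ R'.inf' hR'ne E :=
        Finset.le_inf' _ _ fun b hb => hemin b (Finset.mem_of_mem_erase hb)
      have hAnn : ∑ j ∈ R', ω j ≤ (rk h R' : ℝ) := hrk R' hR'ne hR'card
      have hspanR : Submodule.span ℂ (h '' ↑R)
          = Submodule.span ℂ {h e} ⊔ Submodule.span ℂ (h '' ↑R') := by
        rw [← hins, Finset.coe_insert, Set.image_insert_eq, Submodule.span_insert]
      have hle1 : rk h R' ≤ rk h R :=
        Submodule.finrank_mono (Submodule.span_mono (Set.image_mono hR'sub))
      have hle2 : rk h R ≤ rk h R' + 1 := by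
        rw [rk, hspanR]
        refine le_trans (Submodule.finrank_add_le_finrank_add_finrank _ _) ?_
        have h1 : Module.finrank ℂ (Submodule.span ℂ ({h e} : Set (Fin (n+1) → ℂ))) = 1 :=
          finrank_span_singleton (hne e)
        rw [h1, ← rk]; omega
      -- core inequality
      have hcore : (∏ j ∈ R', E j ^ ω j) * (E e) ^ ((rk h R' : ℝ) - ∑ j ∈ R', ω j)
          ≤ ∏ j ∈ J', E j := by
        refine le_trans (mul_le_mul_of_nonneg_left ?_ ?_) hJ'prod
        · exact Real.rpow_le_rpow (le_of_lt hEepos) hm' (by linarith)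
        · exact Finset.prod_nonneg fun j _ => Real.rpow_nonneg (by linarith [hE j]) _
      -- algebraic identity
      have hsum : ∑ j ∈ R, ω j = ω e + ∑ j ∈ R', ω j := (Finset.add_sum_erase R ω he).symm
      have hprod : ∏ j ∈ R, E j ^ ω j = E e ^ ω e * ∏ j ∈ R', E j ^ ω j :=
        (Finset.mul_prod_erase R _ he).symm
      have key : ∀ c : ℝ,
          (∏ j ∈ R, E j ^ ω j) * (E e) ^ (((rk h R' : ℝ) + c) - ∑ j ∈ R, ω j)
          = ((∏ j ∈ R', E j ^ ω j) * (E e) ^ ((rk h R' : ℝ) - ∑ j ∈ R', ω j))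
              * (E e) ^ c := by
        intro c
        rw [hprod, hsum, mul_assoc, mul_assoc, ← Real.rpow_add hEepos]
        rw [mul_comm (E e ^ ω e), mul_assoc, ← Real.rpow_add hEepos]
        congr 1
        congr 1
        ring
      rcases Nat.lt_or_ge (rk h R) (rk h R' + 1) with hcase | hcase
      · -- rk h R = rk h R'
        have heq : rk h R = rk h R' := by omega
        have hspaneq : Submodule.span ℂ (h '' ↑R') = Submodule.span ℂ (h '' ↑R) := by
          apply Submodule.eq_of_le_of_finrank_eq
            (Submodule.span_mono (Set.image_mono hR'sub))
          exact heq.symm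
        refine ⟨J', hJ'sub.trans hR'sub, by rw [hJ'card, heq], by rw [hJ'span, hspaneq], ?_⟩
        rw [hinf, heq,
          show ((rk h R':ℝ) - ∑ j ∈ R, ω j) = ((rk h R':ℝ) + 0 - ∑ j ∈ R, ω j) by ring,
          key 0, Real.rpow_zero, mul_one]
        exact hcore
      · -- rk h R = rk h R' + 1
        have heq : rk h R = rk h R' + 1 := le_antisymm hle2 hcase
        have hJ'notmem : e ∉ J' := fun hc => hnotmem (hJ'sub hc)
        refine ⟨insert e J', Finset.insert_subset he (hJ'sub.trans hR'sub), ?_, ?_, ?_⟩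
        · rw [Finset.card_insert_of_notMem hJ'notmem, hJ'card, heq]
        · rw [Finset.coe_insert, Set.image_insert_eq, Submodule.span_insert, hJ'span, ← hspanR]
        · rw [hinf, Finset.prod_insert hJ'notmem,
            show ((rk h R :ℝ) - ∑ j ∈ R, ω j) = ((rk h R':ℝ) + 1 - ∑ j ∈ R, ω j) by
              rw [heq]; push_cast; ring,
            key 1, Real.rpow_one, mul_comm (E e)]
          exact mul_le_mul_of_nonneg_right hcore (le_of_lt hEepos)

/-- Nochka's product lemma: for weights `ω` satisfying the Nochka weight
inequality and any numbers `E_j ≥ 1`, and any `R` with `0 < |R| ≤ N + 1`, one can select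
`rk(R)` indices in `R` spanning a space of dimension `rk(R)` and dominating the weighted
product. -/
theorem nochka_product_lemma
    (n N q : ℕ) (hn : 1 ≤ n) (hnN : n ≤ N) (hq : 2 * N - n + 1 < q)
    (h : Fin q → Fin (n + 1) → ℂ) (hH : SubgeneralPos N h)
    (ω : Fin q → ℝ) (hωpos : ∀ j, 0 < ω j)
    (hrk : ∀ R' : Finset (Fin q), R'.Nonempty → R'.card ≤ N + 1 →
      ∑ j ∈ R', ω j ≤ (rk h R' : ℝ))
    (E : Fin q → ℝ) (hE : ∀ j, 1 ≤ E j)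
    (R : Finset (Fin q)) (hR0 : R.Nonempty) (hRcard : R.card ≤ N + 1) :
    ∃ J : Finset (Fin q), J ⊆ R ∧ J.card = rk h R ∧
      Module.finrank ℂ (Submodule.span ℂ (h '' ↑J)) = rk h R ∧
      ∏ j ∈ R, E j ^ ω j ≤ ∏ j ∈ J, E j := by
  obtain ⟨J, hJsub, hJcard, hJspan, hJprod⟩ :=
    nochka_aux h hH.1 ω E hE hrk R hR0 hRcard
  refine ⟨J, hJsub, hJcard, by rw [hJspan]; rfl, ?_⟩
  refine le_trans ?_ hJprod
  refine le_mul_of_one_le_right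
    (Finset.prod_nonneg fun j _ => Real.rpow_nonneg (by linarith [hE j]) _) ?_
  exact Real.one_le_rpow (Finset.le_inf' _ _ fun b _ => hE b)
    (by linarith [hrk R hR0 hRcard])
end
end

section
/- Let m ≥ 1, c ∈ ℂ^m, and let f_0, …, f_n be entire functions on ℂ^m with no common zeros (a reduced representation of a meromorphic mapping f : ℂ^m → ℙ^n(ℂ)). Then the Casorati determinant C(f_0, …, f_n) vanishes identically on ℂ^m if and only if f_0, …, f_n are linearly dependent over the field 𝒫_c of c-periodic meromorphic functions; equivalently, C(f_0, …, f_n) ≢ 0 if and only if f is linearly nondegenerate over 𝒫_c. -/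
open MeasureTheory Filter Finset Metric

noncomputable section

/-- `ℂ^m` with the Euclidean norm. -/
abbrev Cm (m : ℕ) := EuclideanSpace ℂ (Fin m)

instance (m : ℕ) : MeasurableSpace (Cm m) := MeasurableSpace.comap WithLp.ofLp MeasurableSpace.pi
instance (m : ℕ) : BorelSpace (Cm m) := PiLp.borelSpace 2
instance (m : ℕ) : MeasureSpace (Cm m) := ⟨Measure.map (WithLp.toLp 2) (Measure.pi fun _ => volume)⟩

/-- The mean of `φ` over the sphere `‖z‖ = r`, with respect to the normalized surface
measure. -/
def sphereMean (m : ℕ) (φ : Cm m → ℝ) (r : ℝ) : ℝ :=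
  ⨍ ξ : sphere (0 : Cm m) 1, φ (r • (ξ : Cm m)) ∂((volume : Measure (Cm m)).toSphere)

def logPlus (x : ℝ) : ℝ := max (Real.log x) 0

/-- The Nevanlinna characteristic function of a tuple of entire functions. -/
def charT {m : ℕ} {ι : Type*} [Fintype ι] [Nonempty ι] (g : ι → Cm m → ℂ) (r : ℝ) : ℝ :=
  sphereMean m (fun z => Real.log (⨆ j, ‖g j z‖)) r -
    sphereMean m (fun z => Real.log (⨆ j, ‖g j z‖)) 1

/-- The hyperorder `ζ₂` of a tuple of entire functions. -/
def hyperOrder {m : ℕ} {ι : Type*} [Fintype ι] [Nonempty ι] (g : ι → Cm m → ℂ) : ℝ :=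
  limsup (fun r : ℝ => logPlus (logPlus (charT g r)) / Real.log r) atTop

/-- The Casorati determinant `C(g₀, …, g_n)(z) = det (g_j (z + k • c))`. -/
def casorati {m n : ℕ} (c : Cm m) (g : Fin (n + 1) → Cm m → ℂ) (z : Cm m) : ℂ :=
  Matrix.det (Matrix.of fun k j : Fin (n + 1) => g j (z + (k : ℕ) • c))

/-- The order of vanishing of `g` at `a` (`⊤` if all Taylor coefficients vanish). -/
def ordAt {m : ℕ} (g : Cm m → ℂ) (a : Cm m) : ℕ∞ :=
  sInf ((fun k : ℕ => (k : ℕ∞)) '' {k : ℕ | iteratedFDeriv ℂ k g a ≠ 0})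

def FiniteLogMeasure (E : Set ℝ) : Prop :=
  E ⊆ Set.Ici 1 ∧ (∫⁻ t in E, ENNReal.ofReal t⁻¹) < ⊤

/-- `f₀, …, f_n` are linearly dependent over the field `𝒫_c` of `c`-periodic meromorphic
functions on `ℂ^m`. -/
def LinDepPc {m n : ℕ} (c : Cm m) (f : Fin (n + 1) → Cm m → ℂ) : Prop :=
  ∃ p q : Fin (n + 1) → Cm m → ℂ,
    (∀ j, Differentiable ℂ (p j)) ∧ (∀ j, Differentiable ℂ (q j)) ∧
    (∀ j, q j ≠ 0) ∧
    (∀ j, ∀ z, p j (z + c) * q j z = p j z * q j (z + c)) ∧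
    (∃ j, p j ≠ 0) ∧
    (∀ z, ∑ j, p j z * (∏ k ∈ univ.erase j, q k z) * f j z = 0)

/-- `f₀, …, f_n` are linearly dependent over the class `𝒫_c^λ` of `c`-periodic meromorphic
functions of hyperorder `< λ` on `ℂ^m`. -/
def LinDepPcL {m n : ℕ} (c : Cm m) (lam : ℝ) (f : Fin (n + 1) → Cm m → ℂ) : Prop :=
  ∃ p q : Fin (n + 1) → Cm m → ℂ,
    (∀ j, Differentiable ℂ (p j)) ∧ (∀ j, Differentiable ℂ (q j)) ∧
    (∀ j, q j ≠ 0) ∧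
    (∀ j, ∀ z, p j (z + c) * q j z = p j z * q j (z + c)) ∧
    (∀ j, hyperOrder ![p j, q j] < lam) ∧
    (∃ j, p j ≠ 0) ∧
    (∀ z, ∑ j, p j z * (∏ k ∈ univ.erase j, q k z) * f j z = 0)

section Helpers
open Matrix

/-- Adjugate entry as a signed minor. -/
lemma adjugate_eq_minor {N : ℕ} (A : Matrix (Fin (N+1)) (Fin (N+1)) ℂ) (i j : Fin (N+1)) :
    adjugate A i j = (-1) ^ ((j : ℕ) + (i : ℕ)) *
      (A.submatrix j.succAbove i.succAbove).det := by
  rw [adjugate_apply, det_succ_row _ j]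
  rw [Finset.sum_eq_single i]
  · have h1 : (A.updateRow j (Pi.single i 1)) j i = 1 := by
      rw [Matrix.updateRow_self]; simp
    have h2 : (A.updateRow j (Pi.single i 1)).submatrix j.succAbove i.succAbove
        = A.submatrix j.succAbove i.succAbove := by
      ext k x
      simp [Matrix.submatrix_apply, Matrix.updateRow_apply, Fin.succAbove_ne]
    rw [h1, h2, mul_one]
  · intro l _ hl
    have : (A.updateRow j (Pi.single i 1)) j l = 0 := by
      rw [Matrix.updateRow_self]; simp [Pi.single_eq_of_ne hl]
    rw [this]; ring
  · intro h; exact absurd (Finset.mem_univ i) h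

/-- If `det A = 0` then the 2×2 minors of the adjugate vanish (adjugate has rank ≤ 1). -/
lemma adj_two_minor {N : ℕ} (A : Matrix (Fin (N+1)) (Fin (N+1)) ℂ) (hdet : A.det = 0)
    (i l s t : Fin (N+1)) :
    adjugate A i s * adjugate A l t = adjugate A l s * adjugate A i t := by
  classical
  -- kernel property of columns of the adjugate
  have hker : ∀ (t' : Fin (N+1)) (k : Fin (N+1)),
      ∑ j, A k j * adjugate A j t' = 0 := by
    intro t' k
    have := congrFun (congrFun (Matrix.mul_adjugate A) k) t'
    rw [Matrix.mul_apply] at this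
    rw [this, hdet, Matrix.smul_apply, smul_eq_mul, zero_mul]
  by_cases hu : ∀ j, adjugate A j s = 0
  · rw [hu i, hu l, zero_mul, zero_mul]
  push_neg at hu
  obtain ⟨i₀, hi₀⟩ := hu
  -- the minor at (s, i₀) is invertible
  have hB : (A.submatrix s.succAbove i₀.succAbove).det ≠ 0 := by
    intro h
    rw [adjugate_eq_minor, h, mul_zero] at hi₀
    exact hi₀ rfl
  -- any kernel vector vanishing at i₀ is zero
  have claim : ∀ w : Fin (N+1) → ℂ, (∀ k, ∑ j, A k j * w j = 0) → w i₀ = 0 → w = 0 := by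
    intro w hw hw0
    have hBw : (A.submatrix s.succAbove i₀.succAbove) *ᵥ (fun x => w (i₀.succAbove x)) = 0 := by
      funext k
      have hsplit := Fin.sum_univ_succAbove (fun j => A (s.succAbove k) j * w j) i₀
      rw [hw (s.succAbove k), hw0, mul_zero, zero_add] at hsplit
      simpa [Matrix.mulVec, dotProduct, Matrix.submatrix_apply] using hsplit.symm
    have hzero := Matrix.eq_zero_of_mulVec_eq_zero hB hBw
    funext j
    rcases eq_or_ne j i₀ with rfl | hj
    · exact hw0
    · obtain ⟨x, rfl⟩ := Fin.exists_succAbove_eq hj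
      exact congrFun hzero x
  set u : Fin (N+1) → ℂ := fun j => adjugate A j s with hu_def
  set v : Fin (N+1) → ℂ := fun j => adjugate A j t with hv_def
  have hcomb : ∀ j, v i₀ * u j = u i₀ * v j := by
    have := claim (fun j => v i₀ * u j - u i₀ * v j)
      (fun k => by
        have h1 := hker s k
        have h2 := hker t k
        have : ∑ j, A k j * (v i₀ * u j - u i₀ * v j)
            = v i₀ * (∑ j, A k j * u j) - u i₀ * (∑ j, A k j * v j) := by
          rw [Finset.mul_sum, Finset.mul_sum, ← Finset.sum_sub_distrib]
          exact Finset.sum_congr rfl (fun j _ => by ring)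
        rw [this, h1, h2, mul_zero, mul_zero, sub_zero])
      (by ring)
    intro j
    have := congrFun this j
    simpa [sub_eq_zero] using this
  by_cases hv0 : v i₀ = 0
  · have hvz : ∀ j, v j = 0 := by
      intro j
      have := hcomb j
      rw [hv0, zero_mul] at this
      exact (mul_eq_zero.mp this.symm).resolve_left hi₀
    show u i * v l = u l * v i
    rw [hvz l, hvz i, mul_zero, mul_zero]
  · have key : v i₀ * (u i * v l) = v i₀ * (u l * v i) := by
      calc v i₀ * (u i * v l) = (v i₀ * u i) * v l := by ring
        _ = (u i₀ * v i) * v l := by rw [hcomb i]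
        _ = v i * (u i₀ * v l) := by ring
        _ = v i * (v i₀ * u l) := by rw [hcomb l]
        _ = v i₀ * (u l * v i) := by ring
    exact mul_left_cancel₀ hv0 key


/-- Finite products of differentiable functions are differentiable. -/
lemma differentiable_prod {m : ℕ} {ι : Type*} (s : Finset ι) (g : ι → Cm m → ℂ)
    (hg : ∀ i ∈ s, Differentiable ℂ (g i)) :
    Differentiable ℂ (fun z => ∏ i ∈ s, g i z) := by
  classical
  induction s using Finset.induction with
  | empty => simpa using differentiable_const (1:ℂ)
  | @insert a s ha ih =>
    simp only [Finset.prod_insert ha]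
    exact (hg a (Finset.mem_insert_self a s)).mul
      (ih (fun i hi => hg i (Finset.mem_insert_of_mem hi)))

/-- Determinants of matrices of differentiable functions are differentiable. -/
lemma differentiable_det {m N : ℕ} (g : Fin N → Fin N → Cm m → ℂ)
    (hg : ∀ k j, Differentiable ℂ (g k j)) :
    Differentiable ℂ fun z => (Matrix.of fun k j => g k j z).det := by
  have : (fun z => (Matrix.of fun k j => g k j z).det)
      = fun z => ∑ σ : Equiv.Perm (Fin N),
          (Equiv.Perm.sign σ : ℂ) * ∏ i, g (σ i) i z := by
    funext z
    rw [Matrix.det_apply]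
    exact Finset.sum_congr rfl (fun σ _ => by
      simp [Units.smul_def, zsmul_eq_mul])
  rw [this]
  refine Differentiable.fun_sum (fun σ _ => Differentiable.const_mul ?_ _)
  exact differentiable_prod Finset.univ _ (fun i _ => hg (σ i) i)

/-- If an entire function is somewhere nonzero, it is nonzero at points arbitrarily close to
any given point. -/
lemma exists_ne_zero_near {m : ℕ} {h : Cm m → ℂ} (hd : Differentiable ℂ h)
    {z₀ : Cm m} (h0 : h z₀ ≠ 0) (w : Cm m) {δ : ℝ} (hδ : 0 < δ) :
    ∃ z, dist z w < δ ∧ h z ≠ 0 := by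
  set φ : ℂ → Cm m := fun t => w + t • (z₀ - w) with hφ
  have hφd : Differentiable ℂ φ := (differentiable_id.smul_const _).const_add _
  have hF : Differentiable ℂ (h ∘ φ) := hd.comp hφd
  have hF1 : (h ∘ φ) 1 ≠ 0 := by
    simpa [φ, Function.comp] using h0
  set δ' : ℝ := δ / (‖z₀ - w‖ + 1) with hδ'def
  have hpos : (0:ℝ) < ‖z₀ - w‖ + 1 := by positivity
  have hδ' : 0 < δ' := div_pos hδ hpos
  by_contra hcon
  push_neg at hcon
  have hzero : Set.EqOn (h ∘ φ) 0 Set.univ := by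
    apply AnalyticOnNhd.eqOn_zero_of_preconnected_of_eventuallyEq_zero
      (Complex.analyticOnNhd_univ_iff_differentiable.mpr hF) isPreconnected_univ
      (Set.mem_univ (0:ℂ))
    filter_upwards [Metric.ball_mem_nhds (0:ℂ) hδ'] with t ht
    have htn : ‖t‖ < δ' := by simpa [Metric.mem_ball, dist_eq_norm] using ht
    have hdist : dist (φ t) w < δ := by
      have : dist (φ t) w = ‖t‖ * ‖z₀ - w‖ := by
        simp [φ, dist_eq_norm, norm_smul]
      rw [this]
      have h1 : ‖t‖ * ‖z₀ - w‖ ≤ ‖t‖ * (‖z₀ - w‖ + 1) :=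
        mul_le_mul_of_nonneg_left (by linarith) (norm_nonneg t)
      have h2 : ‖t‖ * (‖z₀ - w‖ + 1) < δ' * (‖z₀ - w‖ + 1) :=
        mul_lt_mul_of_pos_right htn hpos
      have h3 : δ' * (‖z₀ - w‖ + 1) = δ := div_mul_cancel₀ δ (ne_of_gt hpos)
      linarith
    exact hcon _ hdist
  exact hF1 (hzero (Set.mem_univ 1))

lemma dense_ne_zero {m : ℕ} {h : Cm m → ℂ} (hd : Differentiable ℂ h)
    (hne : ∃ z, h z ≠ 0) : Dense {z | h z ≠ 0} := by
  rw [Metric.dense_iff]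
  intro x r hr
  obtain ⟨z₀, h0⟩ := hne
  obtain ⟨z, hz, hz0⟩ := exists_ne_zero_near hd h0 x hr
  exact ⟨z, Metric.mem_ball.mpr hz, hz0⟩

lemma mul_exists_ne_zero {m : ℕ} {g₁ g₂ : Cm m → ℂ} (h1 : Differentiable ℂ g₁)
    (h2 : Differentiable ℂ g₂) (e1 : ∃ z, g₁ z ≠ 0) (e2 : ∃ z, g₂ z ≠ 0) :
    ∃ z, g₁ z * g₂ z ≠ 0 := by
  obtain ⟨z₂, hz₂⟩ := e2
  have hU : IsOpen {z | g₂ z ≠ 0} := isOpen_ne.preimage h2.continuous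
  obtain ⟨z, hz1, hz2⟩ := (dense_ne_zero h1 e1).exists_mem_open hU ⟨z₂, hz₂⟩
  exact ⟨z, mul_ne_zero hz1 hz2⟩

/-- A finite product of entire functions, each somewhere nonzero, is differentiable and
somewhere nonzero. -/
lemma prod_entire_ne_zero {m : ℕ} {ι : Type*} (s : Finset ι) (g : ι → Cm m → ℂ)
    (hd : ∀ i ∈ s, Differentiable ℂ (g i)) (hne : ∀ i ∈ s, ∃ z, g i z ≠ 0) :
    Differentiable ℂ (fun z => ∏ i ∈ s, g i z) ∧ ∃ z, (∏ i ∈ s, g i z) ≠ 0 := by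
  classical
  induction s using Finset.induction with
  | empty => exact ⟨by simpa using differentiable_const (1:ℂ), ⟨0, by simp⟩⟩
  | @insert a s ha ih =>
    obtain ⟨ihd, ihz⟩ := ih (fun i hi => hd i (Finset.mem_insert_of_mem hi))
      (fun i hi => hne i (Finset.mem_insert_of_mem hi))
    have hda := hd a (Finset.mem_insert_self a s)
    have hprod : (fun z => ∏ i ∈ insert a s, g i z)
        = fun z => g a z * ∏ i ∈ s, g i z := by
      funext z; rw [Finset.prod_insert ha]
    constructor
    · rw [hprod]; exact hda.mul ihd
    · simp only [Finset.prod_insert ha]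
      exact mul_exists_ne_zero hda ihd (hne a (Finset.mem_insert_self a s)) ihz

end Helpers

/-- Lemma 3.4 (i): the Casorati determinant of a reduced representation
vanishes identically iff the coordinate functions are linearly dependent over 𝒫_c. -/
theorem casorati_eq_zero_iff_linDepPc
    (m : ℕ) (hm : 1 ≤ m) (c : Cm m) (n : ℕ)
    (f : Fin (n + 1) → Cm m → ℂ)
    (hf : ∀ j, Differentiable ℂ (f j))
    (hred : ∀ z, ∃ j, f j z ≠ 0) :
    casorati c f = 0 ↔ LinDepPc c f := by
  constructor
  · intro hcas
    classical
    -- `P s`: some subfamily of size `s+1` has nonvanishing Casoratian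
    let P : ℕ → Prop := fun s => ∃ e : Fin (s+1) ↪ Fin (n+1),
      casorati c (fun i => f (e i)) ≠ 0
    have hP0 : P 0 := by
      obtain ⟨j₁, hj₁⟩ := hred 0
      refine ⟨⟨fun _ => j₁, fun a b _ => ?_⟩, fun h0 => ?_⟩
      · have ha := a.isLt
        have hb := b.isLt
        exact Fin.ext (by omega)
      have h1 := congrFun h0 0
      rw [casorati, Matrix.det_fin_one] at h1
      simp only [Matrix.of_apply] at h1
      apply hj₁
      simpa using (show f j₁ (0 + ((0 : Fin (0+1)) : ℕ) • c) = 0 from h1)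
    have hPn : ¬ P n := by
      rintro ⟨e, he⟩
      apply he
      have hbij : Function.Bijective e := Finite.injective_iff_bijective.mp e.injective
      let σ : Fin (n+1) ≃ Fin (n+1) := Equiv.ofBijective e hbij
      funext z
      have h1 : casorati c (fun i => f (e i)) z
          = ((Matrix.of fun k j : Fin (n+1) => f j (z + (k:ℕ) • c)).submatrix id σ).det := rfl
      have h2 : (Matrix.of fun k j : Fin (n+1) => f j (z + (k:ℕ) • c)).det = 0 :=
        congrFun hcas z
      rw [h1, Matrix.det_permute', h2, mul_zero]
      rfl
    set r : ℕ := Nat.findGreatest P n with hrdef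
    have hPr : P r := Nat.findGreatest_spec (Nat.zero_le n) hP0
    have hrle : r ≤ n := Nat.findGreatest_le n
    have hrlt : r < n := lt_of_le_of_ne hrle (by rintro h; rw [h] at hPr; exact hPn hPr)
    have hnot : ¬ P (r+1) := Nat.findGreatest_is_greatest
      (show Nat.findGreatest P n < r+1 by omega) (by omega)
    obtain ⟨g, hg⟩ := hPr
    have hnsurj : ¬ Function.Surjective g := by
      intro hsurj
      have := Fintype.card_of_bijective ⟨g.injective, hsurj⟩
      simp only [Fintype.card_fin] at this
      omega
    rw [Function.Surjective] at hnsurj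
    push_neg at hnsurj
    obtain ⟨j, hj⟩ := hnsurj
    -- the extended subfamily of size r+2
    set G : Fin (r+2) → Fin (n+1) := Fin.snoc (⇑g) j with hGdef
    have hG1 : ∀ x : Fin (r+1), G x.castSucc = g x := fun x => Fin.snoc_castSucc _ _ x
    have hG2 : G (Fin.last (r+1)) = j := Fin.snoc_last _ _
    have hGinj : Function.Injective G := by
      intro x y hxy
      rcases Fin.eq_castSucc_or_eq_last x with ⟨x', rfl⟩ | rfl <;>
        rcases Fin.eq_castSucc_or_eq_last y with ⟨y', rfl⟩ | rfl
      · rw [hG1, hG1] at hxy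
        exact congrArg Fin.castSucc (g.injective hxy)
      · rw [hG1, hG2] at hxy; exact absurd hxy (hj x')
      · rw [hG2, hG1] at hxy; exact absurd hxy.symm (hj y')
      · rfl
    set F : Fin (r+2) → Cm m → ℂ := fun i => f (G i) with hFdef
    have hFd : ∀ i, Differentiable ℂ (F i) := fun i => hf (G i)
    have hFcas : casorati c F = 0 := by
      by_contra hne
      exact hnot ⟨⟨G, hGinj⟩, hne⟩
    set MF : Cm m → Matrix (Fin (r+2)) (Fin (r+2)) ℂ :=
      fun z => Matrix.of fun k i => F i (z + (k:ℕ) • c) with hMFdef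
    have hMFdet : ∀ z, (MF z).det = 0 := fun z => congrFun hFcas z
    set a : Fin (r+2) → Cm m → ℂ := fun i z => Matrix.adjugate (MF z) i 0 with hadef
    set b : Fin (r+2) → Cm m → ℂ :=
      fun i z => Matrix.adjugate (MF z) i (Fin.last (r+1)) with hbdef
    have hsub : ∀ (z : Cm m) (i : Fin (r+2)),
        (MF z).submatrix (Fin.succAbove 0) i.succAbove
          = (MF (z+c)).submatrix (Fin.succAbove (Fin.last (r+1))) i.succAbove := by
      intro z i
      ext k x
      simp only [Matrix.submatrix_apply, hMFdef, Matrix.of_apply, Fin.zero_succAbove,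
        Fin.succAbove_last, Fin.val_succ, Fin.coe_castSucc]
      congr 1
      rw [succ_nsmul]
      abel
    have hshift : ∀ (i : Fin (r+2)) (z : Cm m),
        a i z = (-1:ℂ)^(r+1) * b i (z+c) := by
      intro i z
      show Matrix.adjugate (MF z) i 0 = (-1:ℂ)^(r+1) * Matrix.adjugate (MF (z+c)) i (Fin.last (r+1))
      rw [adjugate_eq_minor, adjugate_eq_minor, hsub z i]
      simp only [Fin.val_zero, Fin.val_last, zero_add]
      rw [← mul_assoc, ← pow_add]
      congr 1
      have h3 : (r+1) + ((r+1) + (i:ℕ)) = 2*(r+1) + (i:ℕ) := by ring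
      rw [h3, pow_add, pow_mul]
      simp
    have hkernel : ∀ z, ∑ i, F i z * a i z = 0 := by
      intro z
      have h1 := congrFun (congrFun (Matrix.mul_adjugate (MF z)) 0) 0
      rw [Matrix.mul_apply, hMFdet z] at h1
      simp only [Matrix.smul_apply, Matrix.one_apply_eq, smul_eq_mul, zero_mul] at h1
      calc ∑ i, F i z * a i z = ∑ i, MF z 0 i * Matrix.adjugate (MF z) i 0 := by
            apply Finset.sum_congr rfl
            intro i _
            congr 1
            show F i z = F i (z + ((0:Fin (r+2)):ℕ) • c)
            simp
        _ = 0 := h1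
    have hlastval : ∀ z, a (Fin.last (r+1)) z
        = (-1:ℂ)^((r+1:ℕ)) * casorati c (fun x => f (g x)) (z + c) := by
      intro z
      show Matrix.adjugate (MF z) (Fin.last (r+1)) 0 = _
      rw [adjugate_eq_minor]
      simp only [Fin.val_zero, Fin.val_last, zero_add]
      congr 1
      rw [casorati]
      congr 1
      ext k x
      simp only [Matrix.submatrix_apply, hMFdef, Matrix.of_apply, Fin.zero_succAbove,
        Fin.succAbove_last]
      rw [show F (Fin.castSucc x) = f (g x) from by show f (G x.castSucc) = f (g x); rw [hG1 x]]
      congr 1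
      simp only [Fin.val_succ]
      rw [succ_nsmul]
      abel
    obtain ⟨w₀, hw₀⟩ := Function.ne_iff.mp hg
    have hane : ∃ z, a (Fin.last (r+1)) z ≠ 0 := by
      refine ⟨w₀ - c, ?_⟩
      rw [hlastval]
      have h4 : w₀ - c + c = w₀ := by abel
      rw [h4]
      exact mul_ne_zero (pow_ne_zero _ (by norm_num)) (by simpa using hw₀)
    have hper_a : ∀ (i : Fin (r+2)) (z : Cm m),
        a i (z + c) * a (Fin.last (r+1)) z = a i z * a (Fin.last (r+1)) (z + c) := by
      intro i z
      have hminor : a i (z+c) * b (Fin.last (r+1)) (z+c)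
          = a (Fin.last (r+1)) (z+c) * b i (z+c) :=
        adj_two_minor (MF (z+c)) (hMFdet (z+c)) i (Fin.last (r+1)) 0 (Fin.last (r+1))
      rw [hshift i z, hshift (Fin.last (r+1)) z]
      linear_combination ((-1:ℂ)^(r+1)) * hminor
    have had : ∀ i : Fin (r+2), Differentiable ℂ (a i) := by
      intro i
      have h5 : a i = fun z => (-1:ℂ)^(((0:Fin (r+2)):ℕ) + (i:ℕ)) *
          (Matrix.of (fun (k : Fin (r+1)) (x : Fin (r+1)) =>
            F (i.succAbove x) (z + (((Fin.succAbove 0 k) : Fin (r+2)):ℕ) • c))).det := by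
        funext z
        rw [show a i z = Matrix.adjugate (MF z) i 0 from rfl, adjugate_eq_minor]
        rfl
      rw [h5]
      exact (differentiable_det _
        (fun k x => (hFd _).comp (differentiable_id.add_const _))).const_mul _
    -- assemble the dependence relation
    refine ⟨fun j' z => ∑ i : Fin (r+2), if G i = j' then a i z else 0,
      fun _ => a (Fin.last (r+1)), ?_, ?_, ?_, ?_, ?_, ?_⟩
    · intro j'
      apply Differentiable.fun_sum
      intro i _
      by_cases hc : G i = j'
      · simpa [hc] using had i
      · simp only [hc, if_false]
        exact differentiable_const 0
    · intro j'
      exact had _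
    · intro j' h0
      obtain ⟨z₁, hz₁⟩ := hane
      exact hz₁ (congrFun h0 z₁)
    · intro j' z
      rw [Finset.sum_mul, Finset.sum_mul]
      apply Finset.sum_congr rfl
      intro i _
      by_cases hc : G i = j'
      · simp only [hc, if_pos]
        exact hper_a i z
      · simp [hc]
    · refine ⟨G (Fin.last (r+1)), fun h0 => ?_⟩
      obtain ⟨z₁, hz₁⟩ := hane
      have h6 : (∑ i : Fin (r+2), if G i = G (Fin.last (r+1)) then a i z₁ else 0) = 0 :=
        congrFun h0 z₁
      have h7 : (∑ i : Fin (r+2), if G i = G (Fin.last (r+1)) then a i z₁ else 0)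
          = a (Fin.last (r+1)) z₁ := by
        simp only [hGinj.eq_iff]
        rw [Finset.sum_ite_eq' Finset.univ (Fin.last (r+1)) (fun i => a i z₁)]
        simp
      rw [h7] at h6
      exact hz₁ h6
    · intro z
      have hprodq : ∀ j' : Fin (n+1),
          (∏ _k ∈ Finset.univ.erase j', a (Fin.last (r+1)) z)
            = a (Fin.last (r+1)) z ^ n := by
        intro j'
        rw [Finset.prod_const, Finset.card_erase_of_mem (Finset.mem_univ _)]
        simp
      calc ∑ j', (∑ i, if G i = j' then a i z else 0)
            * (∏ _k ∈ Finset.univ.erase j', a (Fin.last (r+1)) z) * f j' z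
          = ∑ j', (a (Fin.last (r+1)) z)^n
            * ((∑ i, if G i = j' then a i z else 0) * f j' z) := by
            apply Finset.sum_congr rfl
            intro j' _
            rw [hprodq j']
            ring
        _ = (a (Fin.last (r+1)) z)^n
            * ∑ j', (∑ i, if G i = j' then a i z else 0) * f j' z := by
            rw [Finset.mul_sum]
        _ = (a (Fin.last (r+1)) z)^n * ∑ i, F i z * a i z := by
            congr 1
            calc ∑ j' : Fin (n+1), (∑ i : Fin (r+2), if G i = j' then a i z else 0) * f j' z
                = ∑ j' : Fin (n+1), ∑ i : Fin (r+2),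
                    (if G i = j' then a i z * f j' z else 0) := by
                  apply Finset.sum_congr rfl
                  intro j' _
                  rw [Finset.sum_mul]
                  apply Finset.sum_congr rfl
                  intro i _
                  rw [ite_mul, zero_mul]
              _ = ∑ i : Fin (r+2), ∑ j' : Fin (n+1),
                    (if G i = j' then a i z * f j' z else 0) := Finset.sum_comm
              _ = ∑ i : Fin (r+2), a i z * f (G i) z := by
                  apply Finset.sum_congr rfl
                  intro i _
                  rw [Finset.sum_ite_eq Finset.univ (G i) (fun j' => a i z * f j' z)]
                  simp
              _ = ∑ i, F i z * a i z := by
                  apply Finset.sum_congr rfl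
                  intro i _
                  rw [mul_comm]
        _ = 0 := by rw [hkernel z, mul_zero]
  · -- backward direction: linear dependence over 𝒫_c implies vanishing Casoratian
    intro hdep
    classical
    obtain ⟨p, q, hpd, hqd, hqne, hper, ⟨j₀, hpj₀⟩, hsum⟩ := hdep
    -- auxiliary entire function whose nonvanishing set is where we argue
    set Φ : Cm m → ℂ := fun z =>
      p j₀ z * ∏ i ∈ Finset.range (n+1), ∏ k : Fin (n+1), q k (z + i • c) with hΦdef
    have hqshift : ∀ (k : Fin (n+1)) (i : ℕ), Differentiable ℂ (fun z => q k (z + i • c)) :=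
      fun k i => (hqd k).comp (differentiable_id.add_const _)
    have hexq : ∀ (k : Fin (n+1)) (i : ℕ), ∃ z, q k (z + i • c) ≠ 0 := by
      intro k i
      obtain ⟨w, hw⟩ := Function.ne_iff.mp (hqne k)
      exact ⟨w - i • c, by simpa [sub_add_cancel] using hw⟩
    have hinner : ∀ i : ℕ,
        Differentiable ℂ (fun z => ∏ k : Fin (n+1), q k (z + i • c)) ∧
          ∃ z, (∏ k : Fin (n+1), q k (z + i • c)) ≠ 0 := fun i =>
      prod_entire_ne_zero Finset.univ _ (fun k _ => hqshift k i) (fun k _ => hexq k i)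
    have houter := prod_entire_ne_zero (Finset.range (n+1))
      (fun i z => ∏ k : Fin (n+1), q k (z + i • c))
      (fun i _ => (hinner i).1) (fun i _ => (hinner i).2)
    have hexp : ∃ z, p j₀ z ≠ 0 := Function.ne_iff.mp hpj₀
    have hΦd : Differentiable ℂ Φ := (hpd j₀).mul houter.1
    have hΦne : ∃ z, Φ z ≠ 0 := mul_exists_ne_zero (hpd j₀) houter.1 hexp houter.2
    have hdense : Dense {z | Φ z ≠ 0} := dense_ne_zero hΦd hΦne
    have hzero : ∀ z, Φ z ≠ 0 → casorati c f z = 0 := by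
      intro z hz
      have hz' := mul_ne_zero_iff.mp hz
      have hp0 : p j₀ z ≠ 0 := hz'.1
      have hq0 : ∀ (k : Fin (n+1)) (i : ℕ), i ≤ n → q k (z + i • c) ≠ 0 := by
        intro k i hi
        have h1 := Finset.prod_ne_zero_iff.mp hz'.2 i (Finset.mem_range.mpr (by omega))
        exact Finset.prod_ne_zero_iff.mp h1 k (Finset.mem_univ k)
      have hqz : ∀ k : Fin (n+1), q k z ≠ 0 := by
        intro k
        have := hq0 k 0 (Nat.zero_le n)
        simpa using this
      -- iterated periodicity
      have hstep : ∀ (j : Fin (n+1)) (i : ℕ), i ≤ n →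
          p j (z + i • c) * q j z = p j z * q j (z + i • c) := by
        intro j i
        induction i with
        | zero => simp
        | succ i ih =>
          intro hi
          have ih' := ih (Nat.le_of_succ_le hi)
          have hper' := hper j (z + i • c)
          have hrw : z + i • c + c = z + (i+1) • c := by
            rw [succ_nsmul, ← add_assoc]
          rw [hrw] at hper'
          have hqi : q j (z + i • c) ≠ 0 := hq0 j i (by omega)
          apply mul_left_cancel₀ hqi
          calc q j (z + i • c) * (p j (z + (i+1) • c) * q j z)
              = (p j (z + (i+1) • c) * q j (z + i • c)) * q j z := by ring
            _ = (p j (z + i • c) * q j (z + (i+1) • c)) * q j z := by rw [hper']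
            _ = (p j (z + i • c) * q j z) * q j (z + (i+1) • c) := by ring
            _ = (p j z * q j (z + i • c)) * q j (z + (i+1) • c) := by rw [ih']
            _ = q j (z + i • c) * (p j z * q j (z + (i+1) • c)) := by ring
      set lam : Fin (n+1) → ℂ := fun j => p j z / q j z with hlamdef
      have hlam : ∀ k : Fin (n+1), ∑ j, f j (z + (k:ℕ) • c) * lam j = 0 := by
        intro k
        set w : Cm m := z + (k:ℕ) • c with hwdef
        have hk : (k:ℕ) ≤ n := by omega
        have hqw : ∀ l : Fin (n+1), q l w ≠ 0 := fun l => hq0 l k hk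
        have hratio : ∀ j, lam j = p j w / q j w := by
          intro j
          rw [hlamdef]
          rw [div_eq_div_iff (hqz j) (hqw j)]
          exact (hstep j k hk).symm
        have hQw : (∏ l, q l w) ≠ 0 := Finset.prod_ne_zero_iff.mpr (fun l _ => hqw l)
        have hmain : (∏ l, q l w) * (∑ j, f j w * lam j) = 0 := by
          rw [Finset.mul_sum]
          have : ∀ j ∈ Finset.univ, (∏ l, q l w) * (f j w * lam j)
              = p j w * (∏ l ∈ univ.erase j, q l w) * f j w := by
            intro j _
            rw [hratio j, ← Finset.mul_prod_erase univ _ (Finset.mem_univ j)]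
            field_simp [hqw j]
          rw [Finset.sum_congr rfl this]
          exact hsum w
        rcases mul_eq_zero.mp hmain with h | h
        · exact absurd h hQw
        · exact h
      have hlamne : lam ≠ 0 := by
        intro h0
        have : lam j₀ = 0 := congrFun h0 j₀
        exact (div_ne_zero hp0 (hqz j₀)) this
      have hdet := (Matrix.exists_mulVec_eq_zero_iff
        (M := (Matrix.of fun k j : Fin (n+1) => f j (z + (k:ℕ) • c)))).mp
        ⟨lam, hlamne, funext fun k => by
          simpa [Matrix.mulVec, dotProduct] using hlam k⟩
      exact hdet
    have hcont : Continuous (casorati c f) := by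
      have : casorati c f = fun z => (Matrix.of fun k j : Fin (n+1) =>
          (fun z' => f j (z' + (k:ℕ) • c)) z).det := rfl
      rw [this]
      exact (differentiable_det _ (fun k j =>
        (hf j).comp (differentiable_id.add_const _))).continuous
    exact Continuous.ext_on hdense hcont continuous_const hzero
end
end
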